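/- Let n ≥ 1, x₀ ∈ ℝⁿ and 2 < m < 3. For r > 0 define U(·, r) : ℝⁿ → ℝ by U(x, r) = exp(−1/(r² − |x−x₀|²)) if |x−x₀| < r and U(x, r) = 0 otherwise. Then there exists r₁ ∈ (0,1) such that for every x ∈ ℝⁿ one has U(x, r₁)^{3−m} ≥ (m−1) Δ U(x, r₁), where Δ is taken in the x variable. -/

import Mathlib

open Set Filter

/-- The Laplacian of `f : ℝⁿ → ℝ` at `x`: the sum of the second partial
derivatives in the coordinate directions. -/
noncomputable def laplacian {n : ℕ} (f : EuclideanSpace ℝ (Fin n) → ℝ)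
    (x : EuclideanSpace ℝ (Fin n)) : ℝ :=
  ∑ i : Fin n, iteratedFDeriv ℝ 2 f x ![EuclideanSpace.single i 1, EuclideanSpace.single i 1]

/-- for `2 < m < 3` there is a radius `r₁ ∈ (0,1)` such that the standard
bump function `U(·, r₁)` supported in `B(x₀, r₁)` satisfies
`U(x, r₁)^{3−m} ≥ (m−1) Δ U(x, r₁)` for every `x ∈ ℝⁿ`. -/

noncomputable def phiAux (s : ℝ) : ℝ := s⁻¹ ^ 2 * expNegInvGlue s
noncomputable def psiAux (s : ℝ) : ℝ := s⁻¹ ^ 2 * (s⁻¹ ^ 2 - 2 * s⁻¹) * expNegInvGlue s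

lemma hasDerivAt_glue (s : ℝ) : HasDerivAt expNegInvGlue (phiAux s) s := by
  have h := expNegInvGlue.hasDerivAt_polynomial_eval_inv_mul 1 s
  simpa [phiAux] using h

set_option linter.unnecessarySeqFocus false in
lemma hasDerivAt_phiAux (s : ℝ) : HasDerivAt phiAux (psiAux s) s := by
  have h := expNegInvGlue.hasDerivAt_polynomial_eval_inv_mul (Polynomial.X ^ 2) s
  show HasDerivAt (fun x : ℝ => x⁻¹ ^ 2 * expNegInvGlue x)
    (s⁻¹ ^ 2 * (s⁻¹ ^ 2 - 2 * s⁻¹) * expNegInvGlue s) s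
  have h2 : HasDerivAt (fun x : ℝ => x⁻¹ ^ 2 * expNegInvGlue x)
      (Polynomial.eval s⁻¹ (Polynomial.X ^ 2 *
        (Polynomial.X ^ 2 - Polynomial.derivative (R := ℝ) (Polynomial.X ^ 2))) *
        expNegInvGlue s) s := by
    convert h using 2 with y <;> simp
  refine h2.congr_deriv ?_
  simp only [Polynomial.derivative_X_pow, Polynomial.eval_mul, Polynomial.eval_pow,
    Polynomial.eval_X, Polynomial.eval_sub, Polynomial.eval_C, Polynomial.eval_smul]
  push_cast
  ring


noncomputable def innerB (n : ℕ) :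
    EuclideanSpace ℝ (Fin n) →L[ℝ] EuclideanSpace ℝ (Fin n) →L[ℝ] ℝ := innerSL ℝ

@[simp] lemma innerB_apply {n : ℕ} (w v : EuclideanSpace ℝ (Fin n)) :
    innerB n w v = inner ℝ w v := rfl

section lap

variable {n : ℕ} (x₀ : EuclideanSpace ℝ (Fin n)) (r : ℝ)

set_option maxHeartbeats 1000000 in
lemma laplacian_glue (x : EuclideanSpace ℝ (Fin n)) :
    laplacian (fun y => expNegInvGlue (r ^ 2 - ‖y - x₀‖ ^ 2)) x =
      4 * psiAux (r ^ 2 - ‖x - x₀‖ ^ 2) * ‖x - x₀‖ ^ 2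
        - 2 * n * phiAux (r ^ 2 - ‖x - x₀‖ ^ 2) := by
  set g : EuclideanSpace ℝ (Fin n) → ℝ :=
    fun y => expNegInvGlue (r ^ 2 - ‖y - x₀‖ ^ 2) with hg
  set F : EuclideanSpace ℝ (Fin n) → (EuclideanSpace ℝ (Fin n) →L[ℝ] ℝ) :=
    fun y => (-2 * phiAux (r ^ 2 - ‖y - x₀‖ ^ 2)) • innerB n (y - x₀) with hF
  have hhd : ∀ y : EuclideanSpace ℝ (Fin n),
      HasFDerivAt (fun z : EuclideanSpace ℝ (Fin n) => r ^ 2 - ‖z - x₀‖ ^ 2)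
        ((-2 : ℝ) • innerB n (y - x₀)) y := by
    intro y
    have h1 : HasFDerivAt (fun z : EuclideanSpace ℝ (Fin n) => z - x₀)
        (ContinuousLinearMap.id ℝ (EuclideanSpace ℝ (Fin n))) y :=
      (hasFDerivAt_id y).sub_const x₀
    have h3 := (hasFDerivAt_const (r ^ 2) y).sub h1.norm_sq
    refine h3.congr_fderiv ?_
    ext v
    simp [two_smul]
    ring
  have hgd : ∀ y, HasFDerivAt g (F y) y := by
    intro y
    have h2 := (hasDerivAt_glue (r ^ 2 - ‖y - x₀‖ ^ 2)).comp_hasFDerivAt y (hhd y)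
    refine h2.congr_fderiv ?_
    ext v
    simp [hF]
    ring
  set G : EuclideanSpace ℝ (Fin n) →
      (EuclideanSpace ℝ (Fin n) →L[ℝ] EuclideanSpace ℝ (Fin n) →L[ℝ] ℝ) := fun y =>
    (4 * psiAux (r ^ 2 - ‖y - x₀‖ ^ 2)) •
        ((innerB n (y - x₀)).smulRight (innerB n (y - x₀)))
      + (-2 * phiAux (r ^ 2 - ‖y - x₀‖ ^ 2)) • innerB n with hG
  have hFd : ∀ y, HasFDerivAt F (G y) y := by
    intro y
    have hc : HasFDerivAt
        (fun z : EuclideanSpace ℝ (Fin n) => -2 * phiAux (r ^ 2 - ‖z - x₀‖ ^ 2))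
        ((-2 * psiAux (r ^ 2 - ‖y - x₀‖ ^ 2)) • ((-2 : ℝ) • innerB n (y - x₀))) y := by
      have hp : HasDerivAt (fun s : ℝ => -2 * phiAux s)
          (-2 * psiAux (r ^ 2 - ‖y - x₀‖ ^ 2)) (r ^ 2 - ‖y - x₀‖ ^ 2) :=
        (hasDerivAt_phiAux _).const_mul (-2)
      exact hp.comp_hasFDerivAt (f := fun z => r ^ 2 - ‖z - x₀‖ ^ 2) y (hhd y)
    have hL : HasFDerivAt (fun z : EuclideanSpace ℝ (Fin n) => innerB n (z - x₀))
        (innerB n) y :=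
      ((innerB n).hasFDerivAt.comp y
        ((hasFDerivAt_id y).sub_const x₀)).congr_fderiv ((innerB n).comp_id)
    have h5 := hc.smul hL
    refine h5.congr_fderiv ?_
    ext w v
    simp [hG]
    ring
  have hfd2 : ∀ y, fderiv ℝ (fderiv ℝ g) y = G y := by
    intro y
    have hfg : fderiv ℝ g = F := funext fun z => (hgd z).fderiv
    rw [hfg]
    exact (hFd y).fderiv
  have hsq : ∑ i : Fin n, ((x - x₀) i * (x - x₀) i) = ‖x - x₀‖ ^ 2 := by
    rw [← real_inner_self_eq_norm_sq]
    simp only [PiLp.inner_apply, RCLike.inner_apply, conj_trivial]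
  have heval : ∀ i : Fin n, iteratedFDeriv ℝ 2 g x
      ![EuclideanSpace.single i 1, EuclideanSpace.single i 1] =
      4 * psiAux (r ^ 2 - ‖x - x₀‖ ^ 2) * ((x - x₀) i * (x - x₀) i)
        - 2 * phiAux (r ^ 2 - ‖x - x₀‖ ^ 2) := by
    intro i
    rw [iteratedFDeriv_two_apply, hfd2]
    simp [hG, EuclideanSpace.inner_single_right, EuclideanSpace.single_apply]
    ring
  unfold laplacian
  calc ∑ i : Fin n, iteratedFDeriv ℝ 2 g x
        ![EuclideanSpace.single i 1, EuclideanSpace.single i 1]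
      = ∑ i : Fin n, (4 * psiAux (r ^ 2 - ‖x - x₀‖ ^ 2) * ((x - x₀) i * (x - x₀) i)
          - 2 * phiAux (r ^ 2 - ‖x - x₀‖ ^ 2)) :=
        Finset.sum_congr rfl fun i _ => heval i
    _ = 4 * psiAux (r ^ 2 - ‖x - x₀‖ ^ 2) * (∑ i : Fin n, ((x - x₀) i * (x - x₀) i))
          - 2 * n * phiAux (r ^ 2 - ‖x - x₀‖ ^ 2) := by
        rw [Finset.sum_sub_distrib, ← Finset.mul_sum]
        simp only [Finset.sum_const, Finset.card_fin, nsmul_eq_mul]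
        ring
    _ = _ := by rw [hsq]

end lap

lemma key_ineq (nn m r t : ℝ) (hn : 0 ≤ nn) (hm2 : 2 < m) (hm3 : m < 3) (ht : 0 ≤ t)
    (hr0 : 0 < r) (hr : 25000 * r ^ 4 ≤ (m - 2) ^ 5) :
    (m - 1) * (4 * psiAux (r ^ 2 - t) * t - 2 * nn * phiAux (r ^ 2 - t)) ≤
      expNegInvGlue (r ^ 2 - t) ^ (3 - m) := by
  rcases le_or_gt (r ^ 2 - t) 0 with hs | hs
  · rw [expNegInvGlue.zero_of_nonpos hs, Real.zero_rpow (by linarith : (3 : ℝ) - m ≠ 0)]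
    simp [phiAux, psiAux, expNegInvGlue.zero_of_nonpos hs]
  · set s := r ^ 2 - t with hsdef
    have hglue : expNegInvGlue s = Real.exp (-s⁻¹) := by
      rw [expNegInvGlue, if_neg (not_le.2 hs)]
    set u := s⁻¹ with hu
    have hu0 : 0 < u := inv_pos.2 hs
    have hsu : s * u = 1 := mul_inv_cancel₀ hs.ne'
    have hsr : s ≤ r ^ 2 := by nlinarith
    have hy : 0 ≤ (m - 2) * u / 5 := by
      have : 0 < m - 2 := by linarith
      positivity
    have h1 : (m - 2) * u / 5 ≤ Real.exp ((m - 2) * u / 5) := by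
      linarith [Real.add_one_le_exp ((m - 2) * u / 5)]
    have h2 : ((m - 2) * u / 5) ^ 5 ≤ Real.exp ((m - 2) * u / 5) ^ 5 :=
      pow_le_pow_left₀ hy h1 5
    have h3 : Real.exp ((m - 2) * u / 5) ^ 5 = Real.exp ((m - 2) * u) := by
      rw [← Real.exp_nat_mul]
      norm_num
      ring
    have hexp : (m - 2) ^ 5 * u ^ 5 / 3125 ≤ Real.exp ((m - 2) * u) := by
      rw [← h3]
      calc (m - 2) ^ 5 * u ^ 5 / 3125 = ((m - 2) * u / 5) ^ 5 := by ring
        _ ≤ _ := h2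
    have hmain : (m - 1) * (4 * (u ^ 2 * (u ^ 2 - 2 * u)) * t - 2 * nn * u ^ 2)
        ≤ Real.exp ((m - 2) * u) := by
      have hb1 : (m - 1) * (4 * (u ^ 2 * (u ^ 2 - 2 * u)) * t - 2 * nn * u ^ 2)
          ≤ 8 * t * u ^ 4 := by
        nlinarith [mul_nonneg ht (pow_nonneg hu0.le 4), mul_nonneg ht (pow_nonneg hu0.le 3),
          mul_nonneg hn (sq_nonneg u)]
      have hb2 : 8 * t * u ^ 4 ≤ 8 * r ^ 2 * u ^ 4 := by
        have htr : t ≤ r ^ 2 := by nlinarith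
        nlinarith [pow_nonneg hu0.le 4]
      have hru : 1 ≤ r ^ 2 * u := by nlinarith
      have hb3 : 8 * r ^ 2 * u ^ 4 ≤ 8 * r ^ 4 * u ^ 5 := by
        nlinarith [mul_nonneg (mul_nonneg (sq_nonneg r) (pow_nonneg hu0.le 4)) (sub_nonneg.2 hru)]
      have hb4 : 8 * r ^ 4 * u ^ 5 ≤ (m - 2) ^ 5 * u ^ 5 / 3125 := by
        nlinarith [mul_nonneg (pow_nonneg hu0.le 5) (sub_nonneg.2 hr)]
      linarith
    calc (m - 1) * (4 * psiAux s * t - 2 * nn * phiAux s)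
        = ((m - 1) * (4 * (u ^ 2 * (u ^ 2 - 2 * u)) * t - 2 * nn * u ^ 2)) * Real.exp (-u) := by
          simp only [phiAux, psiAux, hglue, ← hu]
          ring
      _ ≤ Real.exp ((m - 2) * u) * Real.exp (-u) :=
          mul_le_mul_of_nonneg_right hmain (Real.exp_pos _).le
      _ = Real.exp (-u * (3 - m)) := by
          rw [← Real.exp_add]
          ring_nf
      _ = Real.exp (-u) ^ (3 - m) := Real.exp_mul _ _
      _ = expNegInvGlue s ^ (3 - m) := by rw [hglue]

theorem bump_power_ge_laplacian (n : ℕ) (hn : 1 ≤ n) (x₀ : EuclideanSpace ℝ (Fin n))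
    (m : ℝ) (hm2 : 2 < m) (hm3 : m < 3)
    (U : EuclideanSpace ℝ (Fin n) → ℝ → ℝ)
    (hU : ∀ x r, U x r = if ‖x - x₀‖ < r then Real.exp (-1 / (r ^ 2 - ‖x - x₀‖ ^ 2)) else 0) :
    ∃ r₁ ∈ Set.Ioo (0 : ℝ) 1, ∀ x,
      (m - 1) * laplacian (fun y => U y r₁) x ≤ U x r₁ ^ (3 - m) := by
  have hε0 : 0 < m - 2 := by linarith
  have hε1 : m - 2 < 1 := by linarith
  set r : ℝ := (m - 2) ^ 2 / 15 with hrdef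
  have hr0 : 0 < r := by positivity
  have hr1 : r < 1 := by nlinarith
  have hrkey : 25000 * r ^ 4 ≤ (m - 2) ^ 5 := by
    have h3 : (m - 2) ^ 3 ≤ 1 := by nlinarith
    have h5 : 0 ≤ (m - 2) ^ 5 := by positivity
    have heq : 25000 * r ^ 4 = (25000 / 50625) * ((m - 2) ^ 5 * (m - 2) ^ 3) := by
      rw [hrdef]; ring
    nlinarith [mul_nonneg h5 (sub_nonneg.2 h3)]
  refine ⟨r, ⟨hr0, hr1⟩, fun x => ?_⟩
  have hUg : (fun y => U y r) = fun y => expNegInvGlue (r ^ 2 - ‖y - x₀‖ ^ 2) := by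
    funext y
    rw [hU]
    rcases lt_or_ge ‖y - x₀‖ r with hlt | hle
    · have hpos : 0 < r ^ 2 - ‖y - x₀‖ ^ 2 := by nlinarith [norm_nonneg (y - x₀)]
      rw [if_pos hlt, expNegInvGlue, if_neg (not_le.2 hpos),
        show -1 / (r ^ 2 - ‖y - x₀‖ ^ 2) = -(r ^ 2 - ‖y - x₀‖ ^ 2)⁻¹ by ring]
    · have hnp : r ^ 2 - ‖y - x₀‖ ^ 2 ≤ 0 := by nlinarith [norm_nonneg (y - x₀)]
      rw [if_neg (not_lt.2 hle), expNegInvGlue.zero_of_nonpos hnp]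
  have hx : U x r = expNegInvGlue (r ^ 2 - ‖x - x₀‖ ^ 2) := congrFun hUg x
  rw [hUg, hx, laplacian_glue]
  exact key_ineq n m r (‖x - x₀‖ ^ 2) (Nat.cast_nonneg n) hm2 hm3 (by positivity) hr0 hrkey
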